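/- (The Denning–Schwartz steady-state footprint overestimates the footprint) For every trace of length n with m distinct data items and every window length x with 1 ≤ x ≤ n, fp(x) ≤ ss-fp(x). -/

import Mathlib

open Finset

/-- The data set of a trace `a` of length `n` (indices 1..n). -/
def dataSet (a : ℕ → ℕ) (n : ℕ) : Finset ℕ := (Finset.Icc 1 n).image a

/-- A trace is address-independent: data items are numbered in order of first appearance. -/
def isAI (a : ℕ → ℕ) (n : ℕ) : Prop :=
  ∀ t ∈ Finset.Icc 1 n, 1 ≤ a t ∧ a t ≤ 1 + ((Finset.Ico 1 t).image a).card

/-- Indices `s < t` (with `s ≥ 1`) accessing the same datum as `t`. -/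
def prevSet (a : ℕ → ℕ) (t : ℕ) : Finset ℕ :=
  (Finset.Ico 1 t).filter (fun s => a s = a t)

/-- Reuse time of access `t`: `t - s*` where `s*` is the previous access to the same
datum, or `⊤` for a first access. -/
def reuseTime (a : ℕ → ℕ) (t : ℕ) : ℕ∞ :=
  if h : (prevSet a t).Nonempty then ((t - (prevSet a t).max' h : ℕ) : ℕ∞) else ⊤

/-- Reuse distance of access `t`: the number of distinct data accessed in
`a(s*+1), …, a(t)` where `s*` is the previous access to the same datum,
or `⊤` for a first access. -/
def reuseDist (a : ℕ → ℕ) (t : ℕ) : ℕ∞ :=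
  if h : (prevSet a t).Nonempty then
    ((((Finset.Icc ((prevSet a t).max' h + 1) t).image a).card : ℕ) : ℕ∞)
  else ⊤

/-- Reuse-time histogram: number of accesses whose reuse time equals `i`. -/
def rtHist (a : ℕ → ℕ) (n i : ℕ) : ℕ :=
  ((Finset.Icc 1 n).filter (fun t => reuseTime a t = (i : ℕ∞))).card

/-- Reuse-distance histogram: number of accesses whose reuse distance equals `v`. -/
def rdHist (a : ℕ → ℕ) (n v : ℕ) : ℕ :=
  ((Finset.Icc 1 n).filter (fun t => reuseDist a t = (v : ℕ∞))).card

/-- First access time of datum `e`. -/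
noncomputable def firstAcc (a : ℕ → ℕ) (n e : ℕ) : ℕ :=
  sInf {t | t ∈ Finset.Icc 1 n ∧ a t = e}

/-- Last access time of datum `e`. -/
noncomputable def lastAcc (a : ℕ → ℕ) (n e : ℕ) : ℕ :=
  sSup {t | t ∈ Finset.Icc 1 n ∧ a t = e}

/-- The sorted list of access times of datum `e` in the trace. -/
def occList (a : ℕ → ℕ) (n e : ℕ) : List ℕ :=
  ((Finset.Icc 1 n).filter (fun t => a t = e)).sort (· ≤ ·)

/-- Working-set size `ω(t,x)`: distinct data accessed in the window `a(t-x+1), …, a(t)`. -/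
def wss (a : ℕ → ℕ) (t x : ℕ) : ℕ := ((Finset.Icc (t - x + 1) t).image a).card

/-- Footprint: the average working-set size over all length-`x` windows. -/
def fp (a : ℕ → ℕ) (n x : ℕ) : ℚ :=
  (∑ t ∈ Finset.Icc x n, (wss a t x : ℚ)) / ((n : ℚ) - (x : ℚ) + 1)

/-- Total working-set size `W(x) = Σ_{t=x}^{n} ω(t,x)`, with `W(0) = 0`. -/
def totalW (a : ℕ → ℕ) (n x : ℕ) : ℤ :=
  if x = 0 then 0 else ∑ t ∈ Finset.Icc x n, (wss a t x : ℤ)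

/-- Steady-state footprint `ss-fp(x) = m - (1/n) Σ_{i=x+1}^{n-1} (i-x)·rt(i)`. -/
def ssfp (a : ℕ → ℕ) (n x : ℕ) : ℚ :=
  ((dataSet a n).card : ℚ)
    - (1 / (n : ℚ)) * ∑ i ∈ Finset.Icc (x + 1) (n - 1), ((i : ℚ) - (x : ℚ)) * (rtHist a n i : ℚ)

-- auxiliary
def sLast (a : ℕ → ℕ) (t : ℕ) : ℕ := (WithBot.unbotD 0 (prevSet a t).max)

lemma sLast_eq (a : ℕ → ℕ) (t : ℕ) (h : (prevSet a t).Nonempty) :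
    sLast a t = (prevSet a t).max' h := by
  have := Finset.coe_max' h
  simp [sLast, ← this, WithBot.unbotD]

lemma sLast_mem (a : ℕ → ℕ) (t : ℕ) (h : (prevSet a t).Nonempty) :
    sLast a t ∈ prevSet a t := by
  rw [sLast_eq a t h]; exact Finset.max'_mem _ h

def Uset (a : ℕ → ℕ) (x t : ℕ) : Finset ℕ :=
  if (prevSet a t).Nonempty then Finset.Icc (sLast a t + x) (t - 1) else ∅

lemma sum_rt_eq (a : ℕ → ℕ) (n x : ℕ) :
    ∑ i ∈ Finset.Icc (x+1) (n-1), (i - x) * rtHist a n i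
      = ∑ t ∈ Finset.Icc 1 n, (Uset a x t).card := by
  have step1 : ∀ i, (i - x) * rtHist a n i
      = ∑ t ∈ Finset.Icc 1 n, (if reuseTime a t = (i : ℕ∞) then i - x else 0) := by
    intro i
    rw [rtHist, Finset.card_filter, Finset.mul_sum]
    simp [mul_ite]
  simp only [step1]
  rw [Finset.sum_comm]
  refine Finset.sum_congr rfl (fun t ht => ?_)
  rw [Finset.mem_Icc] at ht
  by_cases h : (prevSet a t).Nonempty
  · set s := (prevSet a t).max' h with hs
    have hrt : reuseTime a t = ((t - s : ℕ) : ℕ∞) := by rw [reuseTime, dif_pos h]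
    have hsmem := Finset.max'_mem _ h
    have hs1 : 1 ≤ s ∧ s < t := by
      have := hsmem; simp only [prevSet, Finset.mem_filter, Finset.mem_Ico] at this
      exact ⟨this.1.1, this.1.2⟩
    simp only [hrt, Nat.cast_inj]
    rw [Finset.sum_ite_eq]
    have hle : t - s ≤ n - 1 := by omega
    rw [Uset, if_pos h, Nat.card_Icc]
    by_cases hi : t - s ∈ Finset.Icc (x+1) (n-1)
    · rw [if_pos hi]
      rw [Finset.mem_Icc] at hi
      have hss : sLast a t = s := sLast_eq a t h
      omega
    · rw [if_neg hi]
      rw [Finset.mem_Icc] at hi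
      have hss : sLast a t = s := sLast_eq a t h
      omega
  · have hrt : reuseTime a t = ⊤ := by rw [reuseTime, dif_neg h]
    simp [hrt, Uset, h]

lemma mem_T1 {a : ℕ → ℕ} {n x : ℕ} {p : (_ : ℕ) × ℕ}
    (hp : p ∈ (Finset.Icc 1 n).sigma (fun t => Uset a x t)) :
    (prevSet a p.1).Nonempty ∧ 1 ≤ p.1 ∧ p.1 ≤ n ∧ 1 ≤ sLast a p.1 ∧
      sLast a p.1 < p.1 ∧ sLast a p.1 + x ≤ p.2 ∧ p.2 ≤ p.1 - 1 := by
  rw [Finset.mem_sigma, Finset.mem_Icc] at hp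
  obtain ⟨⟨h1, h2⟩, hU⟩ := hp
  by_cases h : (prevSet a p.1).Nonempty
  · rw [Uset, if_pos h, Finset.mem_Icc] at hU
    have hmem := sLast_mem a p.1 h
    simp only [prevSet, Finset.mem_filter, Finset.mem_Ico] at hmem
    exact ⟨h, h1, h2, hmem.1.1, hmem.1.2, hU.1, hU.2⟩
  · rw [Uset, if_neg h] at hU; simp at hU

lemma key_ineq (a : ℕ → ℕ) (n x : ℕ) (hx1 : 1 ≤ x) :
    (∑ i ∈ Finset.Icc (x+1) (n-1), (i - x) * rtHist a n i) + ∑ u ∈ Finset.Icc x n, wss a u x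
      ≤ (Finset.Icc x n).card * (dataSet a n).card := by
  rw [sum_rt_eq]
  have h1 : ∑ t ∈ Finset.Icc 1 n, (Uset a x t).card
      = ((Finset.Icc 1 n).sigma (fun t => Uset a x t)).card := (Finset.card_sigma _ _).symm
  have hsub : ∀ u ∈ Finset.Icc x n, (Finset.Icc (u - x + 1) u).image a ⊆ dataSet a n := by
    intro u hu
    rw [Finset.mem_Icc] at hu
    exact Finset.image_subset_image (Finset.Icc_subset_Icc (by omega) hu.2)
  have hcard : (((Finset.Icc x n).sigma
        (fun u => dataSet a n \ (Finset.Icc (u - x + 1) u).image a)).card)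
      = ∑ u ∈ Finset.Icc x n, ((dataSet a n).card - wss a u x) := by
    rw [Finset.card_sigma]
    exact Finset.sum_congr rfl (fun u hu => Finset.card_sdiff_of_subset (hsub u hu))
  have hinj : ((Finset.Icc 1 n).sigma (fun t => Uset a x t)).card
      ≤ ((Finset.Icc x n).sigma
          (fun u => dataSet a n \ (Finset.Icc (u - x + 1) u).image a)).card := by
    apply Finset.card_le_card_of_injOn (fun p => ⟨p.2, a p.1⟩)
    · intro p hp
      obtain ⟨h, h1t, h2t, hs1, hst, hsu, hut⟩ := mem_T1 hp
      rw [Finset.mem_coe, Finset.mem_sigma, Finset.mem_Icc]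
      dsimp only
      refine ⟨⟨by omega, by omega⟩, ?_⟩
      rw [Finset.mem_sdiff]
      constructor
      · exact Finset.mem_image_of_mem a (Finset.mem_Icc.mpr ⟨h1t, h2t⟩)
      · intro hmem
        rw [Finset.mem_image] at hmem
        obtain ⟨v, hv, hav⟩ := hmem
        rw [Finset.mem_Icc] at hv
        have hvp : v ∈ prevSet a p.1 := by
          simp only [prevSet, Finset.mem_filter, Finset.mem_Ico]
          exact ⟨⟨by omega, by omega⟩, hav⟩
        have := Finset.le_max' _ v hvp
        rw [← sLast_eq a p.1 h] at this
        omega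
    · intro p hp q hq hpq
      have hlt : ∀ r s : (_ : ℕ) × ℕ, r ∈ (Finset.Icc 1 n).sigma (fun t => Uset a x t) →
          s ∈ (Finset.Icc 1 n).sigma (fun t => Uset a x t) →
          r.2 = s.2 → a r.1 = a s.1 → r.1 < s.1 → False := by
        intro r s hr hs h2 ha hlt
        obtain ⟨hh, h1t, h2t, hs1, hst, hsu, hut⟩ := mem_T1 hr
        obtain ⟨hh', h1t', h2t', hs1', hst', hsu', hut'⟩ := mem_T1 hs
        have hrp : r.1 ∈ prevSet a s.1 := by
          simp only [prevSet, Finset.mem_filter, Finset.mem_Ico]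
          exact ⟨⟨h1t, hlt⟩, ha⟩
        have := Finset.le_max' _ r.1 hrp
        rw [← sLast_eq a s.1 hh'] at this
        omega
      simp only [Sigma.mk.inj_iff, heq_eq_eq] at hpq
      obtain ⟨h2, ha⟩ := hpq
      rcases lt_trichotomy p.1 q.1 with h | h | h
      · exact absurd (hlt p q hp hq h2 ha h) (by simp)
      · exact Sigma.ext h (by rw [h2])
      · exact absurd (hlt q p hq hp h2.symm ha.symm h) (by simp)
  calc (∑ t ∈ Finset.Icc 1 n, (Uset a x t).card) + ∑ u ∈ Finset.Icc x n, wss a u x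
      ≤ (∑ u ∈ Finset.Icc x n, ((dataSet a n).card - wss a u x))
          + ∑ u ∈ Finset.Icc x n, wss a u x := by
        rw [h1]; rw [hcard] at hinj; omega
    _ = ∑ u ∈ Finset.Icc x n, (((dataSet a n).card - wss a u x) + wss a u x) := by
        rw [Finset.sum_add_distrib]
    _ = ∑ u ∈ Finset.Icc x n, (dataSet a n).card := by
        refine Finset.sum_congr rfl (fun u hu => ?_)
        have : wss a u x ≤ (dataSet a n).card := Finset.card_le_card (hsub u hu)
        omega
    _ = (Finset.Icc x n).card * (dataSet a n).card := by rw [Finset.sum_const, smul_eq_mul]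

/-- The Denning–Schwartz steady-state footprint overestimates the footprint. -/
theorem fp_le_ssfp (n m x : ℕ) (a : ℕ → ℕ) (hm : (dataSet a n).card = m)
    (hx1 : 1 ≤ x) (hxn : x ≤ n) :
    fp a n x ≤ ssfp a n x := by
  have hn1 : 1 ≤ n := le_trans hx1 hxn
  set W : ℕ := ∑ u ∈ Finset.Icc x n, wss a u x with hW
  set S : ℕ := ∑ i ∈ Finset.Icc (x+1) (n-1), (i - x) * rtHist a n i with hS
  have hkey := key_ineq a n x hx1
  rw [← hW, ← hS, Nat.card_Icc, hm] at hkey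
  -- rational versions
  have hd0 : (0:ℚ) < (n : ℚ) - (x : ℚ) + 1 := by
    have : (x:ℚ) ≤ (n:ℚ) := by exact_mod_cast hxn
    linarith
  have hn0 : (0:ℚ) < (n:ℚ) := by exact_mod_cast hn1
  have hdn : (n : ℚ) - (x : ℚ) + 1 ≤ (n:ℚ) := by
    have : (1:ℚ) ≤ (x:ℚ) := by exact_mod_cast hx1
    linarith
  have hSq : ∑ i ∈ Finset.Icc (x + 1) (n - 1), ((i : ℚ) - (x : ℚ)) * (rtHist a n i : ℚ)
      = (S : ℚ) := by
    rw [hS, Nat.cast_sum]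
    refine Finset.sum_congr rfl (fun i hi => ?_)
    rw [Finset.mem_Icc] at hi
    rw [Nat.cast_mul, Nat.cast_sub (by omega : x ≤ i)]
  have hWq : (∑ t ∈ Finset.Icc x n, (wss a t x : ℚ)) = (W : ℚ) := by
    rw [hW, Nat.cast_sum]
  have hkeyQ : (S:ℚ) + (W:ℚ) ≤ ((n:ℚ) - (x:ℚ) + 1) * (m:ℚ) := by
    have h1 : ((S + W : ℕ) : ℚ) ≤ (((n + 1 - x) * m : ℕ) : ℚ) := by exact_mod_cast hkey
    push_cast [Nat.cast_sub (by omega : x ≤ n + 1)] at h1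
    linarith
  have hS0 : (0:ℚ) ≤ (S:ℚ) := by positivity
  rw [fp, ssfp, hm, hSq, hWq]
  have step1 : (W:ℚ) / ((n : ℚ) - (x : ℚ) + 1) ≤ (m:ℚ) - (S:ℚ) / ((n : ℚ) - (x : ℚ) + 1) := by
    rw [div_le_iff₀ hd0, sub_mul, div_mul_cancel₀ _ (ne_of_gt hd0)]
    linarith
  have step2 : (S:ℚ) / (n:ℚ) ≤ (S:ℚ) / ((n : ℚ) - (x : ℚ) + 1) :=
    div_le_div_of_nonneg_left hS0 hd0 hdn
  calc (W:ℚ) / ((n : ℚ) - (x : ℚ) + 1) ≤ (m:ℚ) - (S:ℚ) / ((n : ℚ) - (x : ℚ) + 1) := step1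
    _ ≤ (m:ℚ) - 1 / (n:ℚ) * (S:ℚ) := by
        rw [one_div, inv_mul_eq_div]
        linarith
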